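/- Let Φ ⊆ 𝒳 be nonempty and let ε > 0. If the obfuscation mechanism f satisfies ε-DP on Φ, then for every observed pseudo-location x' ∈ 𝒳 and every x ∈ Φ, the normalized posterior weight satisfies Pr(x|x') / ∑_{y∈Φ} Pr(y|x') ≥ e^{−ε} · π(x) / ∑_{y∈Φ} π(y). -/
import Mathlib


open Finset

noncomputable section

/-- Points of the Euclidean plane. -/
abbrev Pt : Type := EuclideanSpace ℝ (Fin 2)

/-- if `f` satisfies `ε`-DP on a nonempty `Φ ⊆ X`, then for every observed `x'`
and every `x ∈ Φ`, `Pr(x|x') / ∑_{y∈Φ} Pr(y|x') ≥ e^{-ε} · π(x) / ∑_{y∈Φ} π(y)`. -/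
theorem stmt4
    (X : Finset Pt) (hX : X.Nonempty)
    (pr : Pt → ℝ) (hprpos : ∀ x ∈ X, 0 < pr x) (hprsum : ∑ x ∈ X, pr x = 1)
    (f : Pt → Pt → ℝ)  -- `f x' x` denotes f(x' | x)
    (hfpos : ∀ x ∈ X, ∀ x' ∈ X, 0 < f x' x)
    (hfsum : ∀ x ∈ X, ∑ x' ∈ X, f x' x = 1)
    (Φ : Finset Pt) (hΦ : Φ.Nonempty) (hΦX : Φ ⊆ X)
    (ε : ℝ) (hε : 0 < ε)
    (hDP : ∀ x ∈ Φ, ∀ y ∈ Φ, ∀ x' ∈ X, f x' x ≤ Real.exp ε * f x' y)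
    (x' : Pt) (hx' : x' ∈ X)
    (post : Pt → ℝ)  -- `post x` denotes the posterior Pr(x | x')
    (hpost : ∀ x, post x = pr x * f x' x / ∑ y ∈ X, pr y * f x' y)
    :
    ∀ x ∈ Φ, Real.exp (-ε) * pr x / ∑ y ∈ Φ, pr y ≤ post x / ∑ y ∈ Φ, post y := by
  intro x hxΦ
  have hxX := hΦX hxΦ
  have hD : 0 < ∑ y ∈ X, pr y * f x' y :=
    Finset.sum_pos (fun y hy => mul_pos (hprpos y hy) (hfpos y hy x' hx')) hX
  have hS : 0 < ∑ y ∈ Φ, pr y * f x' y :=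
    Finset.sum_pos (fun y hy => mul_pos (hprpos y (hΦX hy)) (hfpos y (hΦX hy) x' hx')) hΦ
  have hP : 0 < ∑ y ∈ Φ, pr y :=
    Finset.sum_pos (fun y hy => hprpos y (hΦX hy)) hΦ
  have hsum : ∑ y ∈ Φ, post y = (∑ y ∈ Φ, pr y * f x' y) / ∑ y ∈ X, pr y * f x' y := by
    simp only [hpost]
    rw [Finset.sum_div]
  have hfx : 0 < f x' x := hfpos x hxX x' hx'
  have hpx : 0 < pr x := hprpos x hxX
  have hrw : post x / ∑ y ∈ Φ, post y = pr x * f x' x / ∑ y ∈ Φ, pr y * f x' y := by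
    rw [hsum, hpost]; field_simp
  rw [hrw]
  have hSle : ∑ y ∈ Φ, pr y * f x' y ≤ Real.exp ε * f x' x * ∑ y ∈ Φ, pr y := by
    rw [Finset.mul_sum]
    refine Finset.sum_le_sum fun y hy => ?_
    have := hDP y hy x hxΦ x' hx'
    have hpy := (hprpos y (hΦX hy)).le
    calc pr y * f x' y ≤ pr y * (Real.exp ε * f x' x) := by nlinarith
      _ = Real.exp ε * f x' x * pr y := by ring
  rw [div_le_div_iff₀ hP hS]
  calc Real.exp (-ε) * pr x * ∑ y ∈ Φ, pr y * f x' y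
      ≤ Real.exp (-ε) * pr x * (Real.exp ε * f x' x * ∑ y ∈ Φ, pr y) := by
        have : 0 ≤ Real.exp (-ε) * pr x := by positivity
        nlinarith [mul_le_mul_of_nonneg_left hSle this]
    _ = (Real.exp (-ε) * Real.exp ε) * (pr x * f x' x * ∑ y ∈ Φ, pr y) := by ring
    _ = pr x * f x' x * ∑ y ∈ Φ, pr y := by
        rw [← Real.exp_add]; simp
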